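/- Proposition 6.1, case i = 11: For every prime ℓ ≥ 5, the number of pairs (m, n) of positive integers with m odd, n not divisible by 3, and ℓ = 3m² + 8n² equals 1 if ℓ ≡ 11 (mod 24), and equals 0 otherwise. -/

import Mathlib

lemma two_not_sq_mod3 : ¬ IsSquare (2 : ZMod 3) := by decide

lemma isSquare_neg_six (ℓ : ℕ) (hℓ : ℓ.Prime) (h24 : ℓ % 24 = 11) :
    IsSquare (-6 : ZMod ℓ) := by
  haveI : Fact ℓ.Prime := ⟨hℓ⟩
  have h2 : IsSquare (-2 : ZMod ℓ) := by
    rw [ZMod.exists_sq_eq_neg_two_iff (by omega)]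
    omega
  have h3 : IsSquare (3 : ZMod ℓ) := by
    haveI : Fact (Nat.Prime 3) := ⟨by norm_num⟩
    have h33 : ((3 : ℕ) : ZMod ℓ) = (3 : ZMod ℓ) := by norm_num
    rw [← h33,
      ZMod.exists_sq_eq_prime_iff_of_mod_four_eq_three (p := ℓ) (q := 3)
        (by omega) (by norm_num) (by omega)]
    intro hsq
    have hl3 : (ℓ : ZMod 3) = 2 := by
      have : ((ℓ % 3 : ℕ) : ZMod 3) = ((ℓ : ℕ) : ZMod 3) := by
        simp [ZMod.natCast_mod]
      rw [← this]; norm_num [show ℓ % 3 = 2 by omega]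
    rw [hl3] at hsq
    exact two_not_sq_mod3 hsq
  have h6 : (-6 : ZMod ℓ) = 3 * (-2) := by ring
  rw [h6]
  exact h3.mul h2

lemma thue_aux (p : ℕ) (hp : p.Prime) (c : ZMod p) (A B : ℕ)
    (h : p < (A + 1) * (B + 1)) :
    ∃ x y : ℤ, x.natAbs ≤ A ∧ y.natAbs ≤ B ∧ ¬(x = 0 ∧ y = 0) ∧
      (x : ZMod p) = c * (y : ZMod p) := by
  haveI : Fact p.Prime := ⟨hp⟩
  have hcard : Fintype.card (ZMod p) < Fintype.card (Fin (A + 1) × Fin (B + 1)) := by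
    simpa [ZMod.card] using h
  obtain ⟨⟨i, j⟩, ⟨i', j'⟩, hne, heq⟩ :=
    Fintype.exists_ne_map_eq_of_card_lt
      (fun q : Fin (A + 1) × Fin (B + 1) =>
        ((q.1.val : ZMod p) - c * (q.2.val : ZMod p))) hcard
  refine ⟨(i.val : ℤ) - i'.val, (j.val : ℤ) - j'.val, ?_, ?_, ?_, ?_⟩
  · have := i.isLt; have := i'.isLt; omega
  · have := j.isLt; have := j'.isLt; omega
  · rintro ⟨hx, hy⟩
    apply hne
    have h1 : i = i' := by ext; omega
    have h2 : j = j' := by ext; omega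
    rw [h1, h2]
  · simp only at heq
    push_cast
    linear_combination heq

lemma mod8_no_rep : ∀ u v : ZMod 8, u ^ 2 + 6 * v ^ 2 ≠ 3 := by decide

lemma no_x2_6d2 (ℓ : ℕ) (h8 : ℓ % 8 = 3) (x d : ℤ) (h : (ℓ : ℤ) = x ^ 2 + 6 * d ^ 2) :
    False := by
  have hc : ((ℓ : ℤ) : ZMod 8) = (x : ZMod 8) ^ 2 + 6 * (d : ZMod 8) ^ 2 := by
    rw [h]; push_cast; ring
  have h3 : ((ℓ : ℤ) : ZMod 8) = 3 := by
    push_cast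
    rw [show ((ℓ : ℕ) : ZMod 8) = ((ℓ % 8 : ℕ) : ZMod 8) by rw [ZMod.natCast_mod], h8]
    norm_num
  exact mod8_no_rep (x : ZMod 8) (d : ZMod 8) (by rw [← hc, h3])

lemma exists_rep_aux (ℓ : ℕ) (h5 : 5 ≤ ℓ) (h24 : ℓ % 24 = 11)
    (c : ZMod ℓ) (hc : 2 * c ^ 2 + 3 = 0)
    (thue : ∀ (A B : ℕ), ℓ < (A + 1) * (B + 1) →
      ∃ x y : ℤ, x.natAbs ≤ A ∧ y.natAbs ≤ B ∧ ¬(x = 0 ∧ y = 0) ∧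
        (x : ZMod ℓ) = c * (y : ZMod ℓ))
    (nox : ∀ x d : ℤ, (ℓ : ℤ) = x ^ 2 + 6 * d ^ 2 → False) :
    ∃ a b : ℤ, (ℓ : ℤ) = 2 * a ^ 2 + 3 * b ^ 2 := by
  set A := Nat.sqrt (3 * ℓ / 2) with hA
  set B := Nat.sqrt (2 * ℓ / 3) with hB
  have hA2 : 2 * A ^ 2 + 1 ≤ 3 * ℓ := by
    have := Nat.sqrt_le (3 * ℓ / 2)
    have h2 : A ^ 2 ≤ 3 * ℓ / 2 := by rw [pow_two]; exact this
    omega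
  have hB2 : 3 * B ^ 2 + 1 ≤ 2 * ℓ := by
    have := Nat.sqrt_le (2 * ℓ / 3)
    have h2 : B ^ 2 ≤ 2 * ℓ / 3 := by rw [pow_two]; exact this
    omega
  have hAB : ℓ < (A + 1) * (B + 1) := by
    have h1 := Nat.lt_succ_sqrt (3 * ℓ / 2)
    have h2 := Nat.lt_succ_sqrt (2 * ℓ / 3)
    have e1 : 3 * ℓ + 1 ≤ 2 * (A + 1) ^ 2 := by
      have : 3 * ℓ / 2 < (A + 1) ^ 2 := by rw [pow_two]; exact h1
      omega
    have e2 : 2 * ℓ + 2 ≤ 3 * (B + 1) ^ 2 := by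
      have : 2 * ℓ / 3 < (B + 1) ^ 2 := by rw [pow_two]; exact h2
      omega
    by_contra hcon
    push_neg at hcon
    have hpow : ((A + 1) * (B + 1)) ^ 2 ≤ ℓ ^ 2 := Nat.pow_le_pow_left hcon 2
    have hexp : (A + 1) ^ 2 * (B + 1) ^ 2 ≤ ℓ ^ 2 := by
      rw [← mul_pow]; exact hpow
    nlinarith
  obtain ⟨x, y, hxA, hyB, hxy0, hcong⟩ := thue A B hAB
  have hx2 : x ^ 2 ≤ (A : ℤ) ^ 2 := by
    rw [← Int.natAbs_sq x]
    exact_mod_cast Nat.pow_le_pow_left hxA 2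
  have hy2 : y ^ 2 ≤ (B : ℤ) ^ 2 := by
    rw [← Int.natAbs_sq y]
    exact_mod_cast Nat.pow_le_pow_left hyB 2
  have hNub : 2 * x ^ 2 + 3 * y ^ 2 ≤ 5 * (ℓ : ℤ) - 2 := by
    have c1 : 2 * (A : ℤ) ^ 2 + 1 ≤ 3 * ℓ := by exact_mod_cast hA2
    have c2 : 3 * (B : ℤ) ^ 2 + 1 ≤ 2 * ℓ := by exact_mod_cast hB2
    nlinarith
  have hNpos : 0 < 2 * x ^ 2 + 3 * y ^ 2 := by
    rcases eq_or_ne x 0 with hx | hx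
    · have hy : y ≠ 0 := fun hy => hxy0 ⟨hx, hy⟩
      have : 0 < y ^ 2 := by positivity
      nlinarith
    · have : 0 < x ^ 2 := by positivity
      nlinarith
  have hdvd : (ℓ : ℤ) ∣ 2 * x ^ 2 + 3 * y ^ 2 := by
    rw [← ZMod.intCast_zmod_eq_zero_iff_dvd _ ℓ]
    push_cast
    linear_combination (2 * ((x : ZMod ℓ)) + 2 * c * (y : ZMod ℓ)) * hcong
      + ((y : ZMod ℓ)) ^ 2 * hc
  obtain ⟨k, hk⟩ := hdvd
  have hl0 : (0 : ℤ) < ℓ := by exact_mod_cast by omega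
  have hk1 : 1 ≤ k := by nlinarith
  have hk4 : k ≤ 4 := by nlinarith
  have h2prime : Prime (2 : ℤ) := Int.prime_two
  have h3prime : Prime (3 : ℤ) := Int.prime_three
  interval_cases k
  · exact ⟨x, y, by linarith [hk]⟩
  · have hy : (2 : ℤ) ∣ y := by
      have : (2 : ℤ) ∣ 3 * y ^ 2 := ⟨ℓ - x ^ 2, by linarith [hk]⟩
      rcases h2prime.dvd_mul.mp this with h | h
      · norm_num at h
      · exact h2prime.dvd_of_dvd_pow h
    obtain ⟨d, hd⟩ := hy
    subst hd
    exact (nox x d (by linarith [hk])).elim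
  · have hx : (3 : ℤ) ∣ x := by
      have : (3 : ℤ) ∣ 2 * x ^ 2 := ⟨ℓ - y ^ 2, by linarith [hk]⟩
      rcases h3prime.dvd_mul.mp this with h | h
      · norm_num at h
      · exact h3prime.dvd_of_dvd_pow h
    obtain ⟨e, he⟩ := hx
    subst he
    exact (nox y e (by linarith [hk])).elim
  · have hy : (2 : ℤ) ∣ y := by
      have : (2 : ℤ) ∣ 3 * y ^ 2 := ⟨2 * ℓ - x ^ 2, by linarith [hk]⟩
      rcases h2prime.dvd_mul.mp this with h | h
      · norm_num at h
      · exact h2prime.dvd_of_dvd_pow h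
    obtain ⟨d, hd⟩ := hy
    subst hd
    have hx : (2 : ℤ) ∣ x := by
      have : (2 : ℤ) ∣ x ^ 2 := ⟨ℓ - 3 * d ^ 2, by linarith [hk]⟩
      exact h2prime.dvd_of_dvd_pow this
    obtain ⟨e, he⟩ := hx
    subst he
    exact ⟨e, d, by linarith [hk]⟩

lemma unique_rep (ℓ : ℕ) (hℓ : ℓ.Prime) (h5 : 5 ≤ ℓ) (hodd : ℓ % 2 = 1)
    (a b c d : ℤ) (ha : 0 < a) (hb : 0 < b) (hc : 0 < c) (hd : 0 < d)
    (h1 : (ℓ : ℤ) = 2 * a ^ 2 + 3 * b ^ 2) (h2 : (ℓ : ℤ) = 2 * c ^ 2 + 3 * d ^ 2) :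
    a = c ∧ b = d := by
  have hlp : Prime (ℓ : ℤ) := Nat.prime_iff_prime_int.mp hℓ
  have hl0 : (0 : ℤ) < ℓ := by exact_mod_cast hℓ.pos
  have key : (ℓ : ℤ) * (ℓ : ℤ) = (2 * a * c - 3 * b * d) ^ 2 + 6 * (a * d + b * c) ^ 2 := by
    linear_combination (ℓ : ℤ) * h2 + (2 * c ^ 2 + 3 * d ^ 2) * h1
  have key2 : (ℓ : ℤ) * (ℓ : ℤ) = (2 * a * c + 3 * b * d) ^ 2 + 6 * (a * d - b * c) ^ 2 := by
    linear_combination (ℓ : ℤ) * h2 + (2 * c ^ 2 + 3 * d ^ 2) * h1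
  have hdvd2 : (ℓ : ℤ) ∣ 2 * ((a * d - b * c) * (a * d + b * c)) :=
    ⟨d ^ 2 - b ^ 2, by linear_combination b ^ 2 * h2 - d ^ 2 * h1⟩
  have hnot2 : ¬ (ℓ : ℤ) ∣ 2 := by
    intro h
    have := Int.le_of_dvd (by norm_num) h
    omega
  have hdvd : (ℓ : ℤ) ∣ (a * d - b * c) * (a * d + b * c) :=
    ((hlp.dvd_mul.mp hdvd2).resolve_left hnot2)
  have hadbc : a * d = b * c := by
    rcases hlp.dvd_mul.mp hdvd with h | h
    · by_contra hne
      have hne' : a * d - b * c ≠ 0 := fun h0 => hne (by linarith [h0, sub_eq_zero.mp h0])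
      have habs : (ℓ : ℤ) ≤ |a * d - b * c| := Int.le_of_dvd (abs_pos.mpr hne') ((dvd_abs _ _).mpr h)
      have hsq : (ℓ : ℤ) ^ 2 ≤ (a * d - b * c) ^ 2 := by
        nlinarith [abs_nonneg (a * d - b * c), sq_abs (a * d - b * c)]
      nlinarith [sq_nonneg (2 * a * c + 3 * b * d)]
    · exfalso
      have hpos : 0 < a * d + b * c := by positivity
      have hle : (ℓ : ℤ) ≤ a * d + b * c := Int.le_of_dvd hpos h
      nlinarith [sq_nonneg (2 * a * c - 3 * b * d)]
  have hcop : IsCoprime a b := by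
    rw [Int.isCoprime_iff_gcd_eq_one]
    by_contra hg
    set g := Int.gcd a b with hgdef
    have hga : (g : ℤ) ∣ a := Int.gcd_dvd_left a b
    have hgb : (g : ℤ) ∣ b := Int.gcd_dvd_right a b
    have hg2 : ((g ^ 2 : ℕ) : ℤ) ∣ (ℓ : ℤ) := by
      push_cast
      rw [h1]
      exact dvd_add (Dvd.dvd.mul_left (pow_dvd_pow_of_dvd hga 2) 2)
        (Dvd.dvd.mul_left (pow_dvd_pow_of_dvd hgb 2) 3)
    have hg2n : g ^ 2 ∣ ℓ := Int.ofNat_dvd.mp hg2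
    rcases (Nat.Prime.eq_one_or_self_of_dvd hℓ _ hg2n) with h | h
    · exact hg ((pow_eq_one_iff.mp h).resolve_right (by norm_num))
    · have hgdvd : g ∣ ℓ := ⟨g, by rw [← h]; ring⟩
      rcases hℓ.eq_one_or_self_of_dvd g hgdvd with h' | h'
      · exact hg h'
      · rw [h'] at h
        nlinarith
  have hcop2 : IsCoprime c d := by
    rw [Int.isCoprime_iff_gcd_eq_one]
    by_contra hg
    set g := Int.gcd c d with hgdef
    have hga : (g : ℤ) ∣ c := Int.gcd_dvd_left c d
    have hgb : (g : ℤ) ∣ d := Int.gcd_dvd_right c d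
    have hg2 : ((g ^ 2 : ℕ) : ℤ) ∣ (ℓ : ℤ) := by
      push_cast
      rw [h2]
      exact dvd_add (Dvd.dvd.mul_left (pow_dvd_pow_of_dvd hga 2) 2)
        (Dvd.dvd.mul_left (pow_dvd_pow_of_dvd hgb 2) 3)
    have hg2n : g ^ 2 ∣ ℓ := Int.ofNat_dvd.mp hg2
    rcases (Nat.Prime.eq_one_or_self_of_dvd hℓ _ hg2n) with h | h
    · exact hg ((pow_eq_one_iff.mp h).resolve_right (by norm_num))
    · have hgdvd : g ∣ ℓ := ⟨g, by rw [← h]; ring⟩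
      rcases hℓ.eq_one_or_self_of_dvd g hgdvd with h' | h'
      · exact hg h'
      · rw [h'] at h
        nlinarith
  have hac : a ∣ c := hcop.dvd_of_dvd_mul_left ⟨d, by linarith [hadbc]⟩
  have hca : c ∣ a := hcop2.dvd_of_dvd_mul_left ⟨b, by linarith [hadbc]⟩
  have haeq : a = c := Int.dvd_antisymm (le_of_lt ha) (le_of_lt hc) hac hca
  refine ⟨haeq, ?_⟩
  have h3 : a * d = a * b := by rw [hadbc, haeq]; ring
  have := mul_left_cancel₀ (ne_of_gt ha) h3
  omega

lemma odd_sq_mod8 (m : ℕ) (h : Odd m) : ∃ T, m ^ 2 = 8 * T + 1 := by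
  obtain ⟨k, hk⟩ := h
  rcases Nat.even_or_odd k with ⟨t, ht⟩ | ⟨t, ht⟩
  · exact ⟨2 * t ^ 2 + t, by subst hk ht; ring⟩
  · exact ⟨2 * t ^ 2 + 3 * t + 1, by subst hk ht; ring⟩

lemma sq_mod3_of_not_dvd (n : ℕ) (h : ¬ 3 ∣ n) : ∃ S, n ^ 2 = 3 * S + 1 := by
  have hr : n % 3 = 1 ∨ n % 3 = 2 := by omega
  have hn : n = 3 * (n / 3) + n % 3 := by omega
  set j := n / 3
  rcases hr with hr | hr
  · exact ⟨3 * j ^ 2 + 2 * j, by rw [hn, hr]; ring⟩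
  · exact ⟨3 * j ^ 2 + 4 * j + 1, by rw [hn, hr]; ring⟩

lemma mod24_of_rep (ℓ m n : ℕ) (hm : Odd m) (hn : ¬ 3 ∣ n)
    (h : ℓ = 3 * m ^ 2 + 8 * n ^ 2) : ℓ % 24 = 11 := by
  obtain ⟨T, hT⟩ := odd_sq_mod8 m hm
  obtain ⟨S, hS⟩ := sq_mod3_of_not_dvd n hn
  rw [hT, hS] at h
  omega

lemma rep_props (ℓ a b : ℕ) (h24 : ℓ % 24 = 11)
    (h : ℓ = 2 * a ^ 2 + 3 * b ^ 2) :
    0 < a ∧ 0 < b ∧ 2 ∣ a ∧ Odd b := by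
  have hodd : Odd b := by
    rcases Nat.even_or_odd b with ⟨t, ht⟩ | hb
    · subst ht
      have h' : ℓ = 2 * a ^ 2 + 12 * t ^ 2 := by rw [h]; ring
      generalize a ^ 2 = X at h'
      generalize t ^ 2 = Y at h'
      omega
    · exact hb
  obtain ⟨T, hT⟩ := odd_sq_mod8 b hodd
  rw [hT] at h
  have heven : 2 ∣ a := by
    by_contra ha
    obtain ⟨U, hU⟩ := odd_sq_mod8 a (Nat.odd_iff.mpr (by omega))
    rw [hU] at h
    omega
  have ha : 0 < a := by
    rcases Nat.eq_zero_or_pos a with rfl | ha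
    · simp at h; omega
    · exact ha
  refine ⟨ha, by have := Nat.odd_iff.mp hodd; omega, heven, hodd⟩

theorem prop61_case_eleven (ℓ : ℕ) (hℓ : ℓ.Prime) (h5 : 5 ≤ ℓ) :
    Set.ncard {p : ℕ × ℕ | 1 ≤ p.1 ∧ 1 ≤ p.2 ∧
        Odd p.1 ∧ ¬ (3 ∣ p.2) ∧ ℓ = 3 * p.1 ^ 2 + 8 * p.2 ^ 2} =
      if ℓ % 24 = 11 then 1 else 0 := by
  by_cases h24 : ℓ % 24 = 11
  · rw [if_pos h24]
    haveI : Fact ℓ.Prime := ⟨hℓ⟩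
    obtain ⟨u, hu⟩ := isSquare_neg_six ℓ hℓ h24
    have h2ne : (2 : ZMod ℓ) ≠ 0 := by
      have : ((2 : ℕ) : ZMod ℓ) ≠ 0 := by
        rw [Ne, ZMod.natCast_eq_zero_iff]
        intro hdvd
        have := Nat.le_of_dvd (by norm_num) hdvd
        omega
      simpa using this
    set c : ZMod ℓ := u * (2 : ZMod ℓ)⁻¹ with hcdef
    have hc : 2 * c ^ 2 + 3 = 0 := by
      have hinv : (2 : ZMod ℓ) * (2 : ZMod ℓ)⁻¹ = 1 := mul_inv_cancel₀ h2ne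
      rw [hcdef]
      linear_combination (-2 * (2 : ZMod ℓ)⁻¹ ^ 2) * hu +
        (-(6 * (2 : ZMod ℓ)⁻¹ + 3)) * hinv
    obtain ⟨x, y, hxy⟩ := exists_rep_aux ℓ h5 h24 c hc
      (fun A B h => thue_aux ℓ hℓ c A B h)
      (fun x d h => no_x2_6d2 ℓ (by omega) x d h)
    set a := x.natAbs with hadef
    set b := y.natAbs with hbdef
    have hax : ((a : ℤ)) ^ 2 = x ^ 2 := by rw [← Int.natAbs_sq x]
    have hby : ((b : ℤ)) ^ 2 = y ^ 2 := by rw [← Int.natAbs_sq y]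
    have e2 : (ℓ : ℤ) = 2 * (a : ℤ) ^ 2 + 3 * (b : ℤ) ^ 2 := by rw [hax, hby]; exact hxy
    have hab : ℓ = 2 * a ^ 2 + 3 * b ^ 2 := by exact_mod_cast e2
    obtain ⟨hapos, hbpos, ⟨n₀, hn₀⟩, hbodd⟩ := rep_props ℓ a b h24 hab
    have key : {p : ℕ × ℕ | 1 ≤ p.1 ∧ 1 ≤ p.2 ∧
        Odd p.1 ∧ ¬ (3 ∣ p.2) ∧ ℓ = 3 * p.1 ^ 2 + 8 * p.2 ^ 2} = {(b, n₀)} := by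
      ext ⟨m, n⟩
      simp only [Set.mem_setOf_eq, Set.mem_singleton_iff, Prod.mk.injEq]
      constructor
      · rintro ⟨hm1, hn1, hmodd, hn3, heq⟩
        have e1 : (ℓ : ℤ) = 2 * (2 * (n : ℤ)) ^ 2 + 3 * (m : ℤ) ^ 2 := by
          have := congrArg (Nat.cast : ℕ → ℤ) heq
          push_cast at this
          linarith [this]
        obtain ⟨hu1, hu2⟩ := unique_rep ℓ hℓ h5 (by omega)
          (2 * (n : ℤ)) (m : ℤ) (a : ℤ) (b : ℤ)
          (by exact_mod_cast by omega) (by exact_mod_cast hm1)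
          (by exact_mod_cast hapos) (by exact_mod_cast hbpos) e1 e2
        constructor
        · exact_mod_cast hu2
        · have : 2 * (n : ℤ) = ((2 * n₀ : ℕ) : ℤ) := by rw [← hn₀]; exact_mod_cast hu1
          have h2n : 2 * n = 2 * n₀ := by exact_mod_cast this
          omega
      · rintro ⟨rfl, rfl⟩
        refine ⟨by omega, by omega, hbodd, ?_, by rw [hab, hn₀]; ring⟩
        rintro ⟨t, ht⟩
        have h3dvd : 3 ∣ ℓ := ⟨24 * t ^ 2 + b ^ 2, by rw [hab, hn₀, ht]; ring⟩
        obtain ⟨w, hw⟩ := h3dvd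
        omega
    rw [key]
    exact Set.ncard_singleton _
  · rw [if_neg h24]
    have hempty : {p : ℕ × ℕ | 1 ≤ p.1 ∧ 1 ≤ p.2 ∧
        Odd p.1 ∧ ¬ (3 ∣ p.2) ∧ ℓ = 3 * p.1 ^ 2 + 8 * p.2 ^ 2} = ∅ := by
      ext ⟨m, n⟩
      simp only [Set.mem_setOf_eq, Set.mem_empty_iff_false, iff_false, not_and]
      intro _ _ hmodd hn3 heq
      exact h24 (mod24_of_rep ℓ m n hmodd hn3 heq)
    rw [hempty, Set.ncard_empty]
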